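/- Let n be a positive integer, let v ∈ ℝ^n with v ≠ 0, and let f(x) := sign(v₁x₁ + ⋯ + v_nx_n) (with the convention sign(0) = 1). Then for every i ∈ [n], the degree-1 Hermite coefficient of f satisfies E_{X ~ N(0, I_n)}[f(X) · X_i] = √(2/π) · v_i / ‖v‖₂, where X is drawn from the standard n-dimensional Gaussian distribution. -/

import Mathlib

open MeasureTheory ProbabilityTheory Real Set Filter
open scoped NNReal ENNReal

lemma pdf01 (x : ℝ) : gaussianPDFReal 0 1 x = (Real.sqrt (2*π))⁻¹ * rexp (-x^2/2) := by
  simp [gaussianPDFReal]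

lemma integral_gaussianReal_eq (g : ℝ → ℝ) :
    ∫ x, g x ∂(gaussianReal 0 1) = ∫ x, gaussianPDFReal 0 1 x * g x := by
  rw [gaussianReal_of_var_ne_zero 0 one_ne_zero]
  have h : (gaussianPDF 0 1) = fun x => ((Real.toNNReal (gaussianPDFReal 0 1 x) : ℝ≥0) : ℝ≥0∞) := rfl
  rw [h, integral_withDensity_eq_integral_smul ((measurable_gaussianPDFReal 0 1).real_toNNReal) g]
  refine integral_congr_ae (Filter.Eventually.of_forall fun x => ?_)
  simp [NNReal.smul_def, Real.coe_toNNReal _ (gaussianPDFReal_nonneg 0 1 x)]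

lemma int_gauss_shift (b d : ℝ) (hb : 0 < b) :
    ∫ x : ℝ, rexp (-b * (x + d)^2) = Real.sqrt (π / b) := by
  rw [show (fun x : ℝ => rexp (-b * (x + d)^2)) = fun x => (fun y => rexp (-b * y^2)) (x + d) by rfl,
    integral_add_right_eq_self (fun y : ℝ => rexp (-b * y^2)) d]
  exact integral_gaussian b

lemma gauss_quad (t a c : ℝ) (ht : 0 ≤ t) :
    ∫ x, rexp (-t * (a * x + c)^2) ∂(gaussianReal 0 1)
      = (Real.sqrt (1 + 2*t*a^2))⁻¹ * rexp (-(t * c^2) / (1 + 2*t*a^2)) := by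
  have hb : 0 < t * a^2 + 1/2 := by positivity
  set b : ℝ := t * a^2 + 1/2 with hbdef
  have h2b : 1 + 2*t*a^2 = 2 * b := by rw [hbdef]; ring
  rw [integral_gaussianReal_eq]
  have key : ∀ x : ℝ, gaussianPDFReal 0 1 x * rexp (-t * (a*x+c)^2)
      = (Real.sqrt (2*π))⁻¹ * (rexp (-(t*c^2)/(2*b)) * rexp (-b * (x + t*a*c/b)^2)) := by
    intro x
    rw [pdf01, mul_assoc, ← Real.exp_add, ← Real.exp_add]
    congr 1
    congr 1
    have hb' : t * a^2 + 1/2 ≠ 0 := by positivity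
    rw [hbdef]
    field_simp
    ring
  simp_rw [key, integral_const_mul, int_gauss_shift b _ hb, h2b]
  have hπ : (0:ℝ) < π := pi_pos
  have h1 : Real.sqrt (π / b) = Real.sqrt π / Real.sqrt b := Real.sqrt_div hπ.le b
  have h2 : Real.sqrt (2*π) = Real.sqrt 2 * Real.sqrt π := Real.sqrt_mul (by norm_num) π
  have h3 : Real.sqrt (2*b) = Real.sqrt 2 * Real.sqrt b := Real.sqrt_mul (by norm_num) b
  have s2 : (0:ℝ) < Real.sqrt 2 := by positivity
  have sπ : (0:ℝ) < Real.sqrt π := by positivity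
  have sb : (0:ℝ) < Real.sqrt b := Real.sqrt_pos.2 hb
  rw [h1, h2, h3]
  field_simp

lemma gauss_quad_pi : ∀ (n : ℕ) (v : Fin n → ℝ) (t c : ℝ), 0 ≤ t →
    ∫ x : Fin n → ℝ, rexp (-t * ((∑ j, v j * x j) + c)^2)
        ∂(Measure.pi fun _ : Fin n => gaussianReal 0 1)
      = (Real.sqrt (1 + 2*t*(∑ j, v j^2)))⁻¹ * rexp (-(t * c^2) / (1 + 2*t*(∑ j, v j^2))) := by
  intro n
  induction n with
  | zero =>
    intro v t c ht
    simp
  | succ n ih =>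
    intro v t c ht
    have hmp := measurePreserving_piFinSuccAbove (fun _ : Fin (n+1) => gaussianReal 0 1) 0
    set G : ℝ × (Fin n → ℝ) → ℝ :=
      fun p => rexp (-t * ((v 0 * p.1 + ∑ j, v j.succ * p.2 j) + c)^2) with hG
    have hGe : ∀ x : Fin (n+1) → ℝ, rexp (-t * ((∑ j, v j * x j) + c)^2)
        = G ((MeasurableEquiv.piFinSuccAbove (fun _ => ℝ) 0) x) := by
      intro x
      simp only [hG, MeasurableEquiv.piFinSuccAbove, MeasurableEquiv.coe_mk,
        Equiv.symm_symm, Fin.insertNthEquiv, Equiv.coe_fn_symm_mk]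
      rw [Fin.sum_univ_succ]
      simp [Fin.succAbove_zero, Fin.tail]
    simp_rw [hGe]
    rw [hmp.integral_comp']
    have hGcont : Continuous G := by
      apply Real.continuous_exp.comp
      apply Continuous.mul continuous_const
      apply Continuous.pow
      fun_prop
    have hGint : Integrable G ((gaussianReal 0 1).prod
        (Measure.pi fun _ : Fin n => gaussianReal 0 1)) := by
      refine ⟨hGcont.aestronglyMeasurable, HasFiniteIntegral.of_bounded (C := 1) ?_⟩
      refine Filter.Eventually.of_forall fun p => ?_
      rw [Real.norm_eq_abs, abs_of_pos (Real.exp_pos _)]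
      rw [Real.exp_le_one_iff]
      nlinarith [sq_nonneg ((v 0 * p.1 + ∑ j, v j.succ * p.2 j) + c)]
    rw [integral_prod _ hGint]
    have hS' : 0 ≤ ∑ j : Fin n, (v j.succ)^2 := Finset.sum_nonneg fun _ _ => sq_nonneg _
    set S' : ℝ := ∑ j : Fin n, (v j.succ)^2 with hS'def
    have hA : 0 < 1 + 2*t*S' := by positivity
    set A : ℝ := 1 + 2*t*S' with hAdef
    have inner : ∀ y : ℝ, (∫ z, G (y, z) ∂(Measure.pi fun _ : Fin n => gaussianReal 0 1))
        = (Real.sqrt A)⁻¹ * rexp (-((t/A) * (v 0 * y + c)^2)) := by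
      intro y
      have h := ih (fun j => v j.succ) t (v 0 * y + c) ht
      rw [show (∫ z, G (y, z) ∂(Measure.pi fun _ : Fin n => gaussianReal 0 1))
          = ∫ z : Fin n → ℝ, rexp (-t * ((∑ j, v j.succ * z j) + (v 0 * y + c))^2)
            ∂(Measure.pi fun _ : Fin n => gaussianReal 0 1) from by
        refine integral_congr_ae (Filter.Eventually.of_forall fun z => ?_)
        simp only [hG]
        congr 1
        ring]
      rw [h, ← hS'def, ← hAdef]
      congr 1
      field_simp
    simp_rw [inner, integral_const_mul]
    have hrw : ∀ y : ℝ, rexp (-((t/A) * (v 0 * y + c)^2)) = rexp (-(t/A) * (v 0 * y + c)^2) := by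
      intro y; congr 1; ring
    simp_rw [hrw]
    rw [gauss_quad (t/A) (v 0) c (by positivity)]
    have hSsum : (∑ j : Fin (n+1), v j ^2) = (v 0)^2 + S' := by
      rw [Fin.sum_univ_succ]
    have hB : 0 < 1 + 2*t*((v 0)^2 + S') := by positivity
    rw [hSsum]
    set B : ℝ := 1 + 2*t*((v 0)^2 + S') with hBdef
    have h1 : 1 + 2*(t/A)*(v 0)^2 = B / A := by
      field_simp
      ring
    rw [h1, Real.sqrt_div hB.le]
    have e1 : -((t/A)*c^2)/(B/A) = -(t*c^2)/B := by
      rw [div_eq_div_iff (by positivity) hB.ne']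
      field_simp
    rw [e1]
    have sA : (0:ℝ) < Real.sqrt A := Real.sqrt_pos.2 hA
    have sB : (0:ℝ) < Real.sqrt B := Real.sqrt_pos.2 hB
    field_simp

lemma int_xexp : Integrable (fun x : ℝ => x * rexp (-x^2/2)) := by
  have := integrable_mul_exp_neg_mul_sq (b := 1/2) (by norm_num)
  refine this.congr (Filter.Eventually.of_forall fun x => ?_)
  congr 1
  ring_nf

lemma int_xexp_total : ∫ x : ℝ, x * rexp (-x^2/2) = 0 := by
  have h := integral_neg_eq_self (fun x : ℝ => x * rexp (-x^2/2)) volume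
  have h2 : (∫ x : ℝ, (-x) * rexp (-(-x)^2/2)) = ∫ x : ℝ, -(x * rexp (-x^2/2)) := by
    refine integral_congr_ae (Filter.Eventually.of_forall fun x => ?_)
    ring_nf
  rw [h2, integral_neg] at h
  linarith

lemma int_xexp_Ioi (r : ℝ) : ∫ x in Ioi r, x * rexp (-x^2/2) = rexp (-r^2/2) := by
  have hderiv : ∀ x ∈ Ici r, HasDerivAt (fun y : ℝ => -rexp (-y^2/2))
      (x * rexp (-x^2/2)) x := by
    intro x _
    have h1 : HasDerivAt (fun y : ℝ => -y^2/2) (-x) x := by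
      have h := ((hasDerivAt_pow 2 x).div_const 2).neg
      have heq : (fun y : ℝ => -(y^2/2)) = fun y : ℝ => -y^2/2 := by funext y; ring
      simp only [Pi.neg_def] at h
      rw [heq] at h
      refine h.congr_deriv ?_
      simp
    have h2 := (h1.exp).neg
    simp only [Pi.neg_def] at h2
    refine h2.congr_deriv ?_
    ring
  have htop : Filter.Tendsto (fun y : ℝ => -rexp (-y^2/2)) Filter.atTop (nhds 0) := by
    rw [show (0:ℝ) = -0 by norm_num]
    apply Filter.Tendsto.neg
    apply Real.tendsto_exp_atBot.comp
    have hh : Filter.Tendsto (fun y : ℝ => y^2/2) Filter.atTop Filter.atTop :=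
      (tendsto_pow_atTop two_ne_zero).atTop_div_const two_pos
    have := Filter.tendsto_neg_atTop_atBot.comp hh
    refine Filter.Tendsto.congr (fun y => by simp only [Function.comp]; ring) this
  rw [integral_Ioi_of_hasDerivAt_of_tendsto' hderiv (int_xexp.integrableOn) htop]
  simp

lemma pdfx_eq : (fun x : ℝ => gaussianPDFReal 0 1 x * x)
    = fun x => (Real.sqrt (2*π))⁻¹ * (x * rexp (-x^2/2)) := by
  funext x; rw [pdf01]; ring

lemma int_pdfx : Integrable (fun x : ℝ => gaussianPDFReal 0 1 x * x) := by
  rw [pdfx_eq]; exact int_xexp.const_mul _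

lemma int_pdfx_total : ∫ x : ℝ, gaussianPDFReal 0 1 x * x = 0 := by
  rw [pdfx_eq, integral_const_mul, int_xexp_total, mul_zero]

lemma int_pdfx_Ioi (r : ℝ) :
    ∫ x in Ioi r, gaussianPDFReal 0 1 x * x = (Real.sqrt (2*π))⁻¹ * rexp (-r^2/2) := by
  rw [pdfx_eq, integral_const_mul, int_xexp_Ioi]

lemma int_pdfx_Ici (r : ℝ) :
    ∫ x in Ici r, gaussianPDFReal 0 1 x * x = (Real.sqrt (2*π))⁻¹ * rexp (-r^2/2) := by
  rw [integral_Ici_eq_integral_Ioi, int_pdfx_Ioi]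

lemma sqrt2pi : Real.sqrt (2/π) = 2 / Real.sqrt (2*π) := by
  rw [show (2:ℝ)/π = 2^2/(2*π) by rw [div_eq_div_iff pi_pos.ne' (by positivity)]; ring,
    Real.sqrt_div (by norm_num) _, Real.sqrt_sq (by norm_num)]

lemma sign_mul_gauss (a c : ℝ) :
    ∫ x, (if 0 ≤ a * x + c then (1:ℝ) else -1) * x ∂(gaussianReal 0 1)
      = Real.sign a * Real.sqrt (2/π) * rexp (-c^2 / (2*a^2)) := by
  rw [integral_gaussianReal_eq]
  set F : ℝ → ℝ := fun x => gaussianPDFReal 0 1 x * ((if 0 ≤ a*x+c then (1:ℝ) else -1) * x)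
    with hF
  have hmeas : Measurable F := by
    apply (measurable_gaussianPDFReal 0 1).mul
    apply Measurable.mul _ measurable_id
    exact Measurable.ite (measurableSet_le measurable_const (by fun_prop))
      measurable_const measurable_const
  have hint : Integrable F := by
    refine int_pdfx.mono hmeas.aestronglyMeasurable (Filter.Eventually.of_forall fun x => ?_)
    simp only [hF, Real.norm_eq_abs, abs_mul]
    have h1 : |(if 0 ≤ a*x+c then (1:ℝ) else -1)| = 1 := by split_ifs <;> norm_num
    rw [h1, one_mul]
  rcases lt_trichotomy a 0 with ha | ha | ha
  · -- a < 0
    set r : ℝ := -(c/a) with hr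
    have har : a * r = -c := by
      have ha0 : a ≠ 0 := by intro h; simp [h] at ha
      rw [hr]; field_simp
    have hcond : ∀ x : ℝ, (0 ≤ a*x+c) ↔ x ≤ r := by
      intro x
      constructor
      · intro h
        by_contra hx
        push_neg at hx
        have hp := mul_pos (neg_pos.2 ha) (sub_pos.2 hx)
        nlinarith
      · intro h
        have hp := mul_nonneg (neg_nonneg.2 ha.le) (sub_nonneg.2 h)
        nlinarith
    have hsplit := intervalIntegral.integral_Iic_add_Ioi (b := r) hint.integrableOn hint.integrableOn
    have hIic : ∫ x in Iic r, F x = ∫ x in Iic r, gaussianPDFReal 0 1 x * x := by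
      refine setIntegral_congr_fun measurableSet_Iic fun x hx => ?_
      simp only [hF]
      rw [if_pos ((hcond x).2 hx), one_mul]
    have hIoi : ∫ x in Ioi r, F x = -∫ x in Ioi r, gaussianPDFReal 0 1 x * x := by
      rw [← integral_neg]
      refine setIntegral_congr_fun measurableSet_Ioi fun x hx => ?_
      simp only [hF]
      rw [if_neg (fun h => absurd ((hcond x).1 h) (not_le.2 hx))]
      ring
    have hIicval : ∫ x in Iic r, gaussianPDFReal 0 1 x * x
        = -((Real.sqrt (2*π))⁻¹ * rexp (-r^2/2)) := by
      have h := intervalIntegral.integral_Iic_add_Ioi (b := r) int_pdfx.integrableOn int_pdfx.integrableOn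
      rw [int_pdfx_total, int_pdfx_Ioi] at h
      linarith
    have hLHS : ∫ x, F x = -(2 * ((Real.sqrt (2*π))⁻¹ * rexp (-r^2/2))) := by
      rw [← hsplit, hIic, hIoi, hIicval, int_pdfx_Ioi]; ring
    rw [hLHS, Real.sign_of_neg ha, sqrt2pi]
    have hexp : -r^2/2 = -c^2/(2*a^2) := by
      have ha0 : a ≠ 0 := ha.ne
      rw [hr]
      field_simp
    rw [hexp]
    have : (0:ℝ) < Real.sqrt (2*π) := by positivity
    field_simp
  · -- a = 0
    subst ha
    simp only [hF, zero_mul, zero_add, Real.sign_zero]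
    by_cases hc : 0 ≤ c
    · simp only [if_pos hc, one_mul]
      rw [int_pdfx_total]
    · simp only [if_neg hc]
      have : ∀ x : ℝ, gaussianPDFReal 0 1 x * (-1 * x) = -(gaussianPDFReal 0 1 x * x) := by
        intro x; ring
      simp_rw [this]
      rw [integral_neg, int_pdfx_total]; simp
  · -- 0 < a
    set r : ℝ := -(c/a) with hr
    have har : a * r = -c := by
      have ha0 : a ≠ 0 := by intro h; simp [h] at ha
      rw [hr]; field_simp
    have hcond : ∀ x : ℝ, (0 ≤ a*x+c) ↔ r ≤ x := by
      intro x
      constructor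
      · intro h
        by_contra hx
        push_neg at hx
        have hp := mul_pos ha (sub_pos.2 hx)
        nlinarith
      · intro h
        have hp := mul_nonneg ha.le (sub_nonneg.2 h)
        nlinarith
    have hsplit := intervalIntegral.integral_Iio_add_Ici (b := r) hint.integrableOn hint.integrableOn
    have hIci : ∫ x in Ici r, F x = ∫ x in Ici r, gaussianPDFReal 0 1 x * x := by
      refine setIntegral_congr_fun measurableSet_Ici fun x hx => ?_
      simp only [hF]
      rw [if_pos ((hcond x).2 hx), one_mul]
    have hIio : ∫ x in Iio r, F x = -∫ x in Iio r, gaussianPDFReal 0 1 x * x := by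
      rw [← integral_neg]
      refine setIntegral_congr_fun measurableSet_Iio fun x hx => ?_
      simp only [hF]
      rw [if_neg (fun h => absurd ((hcond x).1 h) (not_le.2 hx))]
      ring
    have hIioval : ∫ x in Iio r, gaussianPDFReal 0 1 x * x
        = -((Real.sqrt (2*π))⁻¹ * rexp (-r^2/2)) := by
      have h := intervalIntegral.integral_Iio_add_Ici (b := r) int_pdfx.integrableOn int_pdfx.integrableOn
      rw [int_pdfx_total, int_pdfx_Ici] at h
      linarith
    have hLHS : ∫ x, F x = 2 * ((Real.sqrt (2*π))⁻¹ * rexp (-r^2/2)) := by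
      rw [← hsplit, hIci, hIio, hIioval, int_pdfx_Ici]; ring
    rw [hLHS, Real.sign_of_pos ha, sqrt2pi]
    have hexp : -r^2/2 = -c^2/(2*a^2) := by
      have ha0 : a ≠ 0 := ha.ne'
      rw [hr]
      field_simp
    rw [hexp]
    have : (0:ℝ) < Real.sqrt (2*π) := by positivity
    field_simp

lemma gauss_id_int : Integrable (fun x : ℝ => x) (gaussianReal 0 1) := by
  rw [gaussianReal_of_var_ne_zero 0 one_ne_zero]
  rw [show (gaussianPDF 0 1)
      = fun x => ((Real.toNNReal (gaussianPDFReal 0 1 x) : ℝ≥0) : ℝ≥0∞) from rfl]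
  rw [integrable_withDensity_iff_integrable_smul ((measurable_gaussianPDFReal 0 1).real_toNNReal)]
  refine int_pdfx.congr (Filter.Eventually.of_forall fun x => ?_)
  simp [NNReal.smul_def, Real.coe_toNNReal _ (gaussianPDFReal_nonneg 0 1 x)]


/-- The degree-1 Hermite coefficient of the LTF f(X) = sign(v·X) under the standard Gaussian:
E_{X ~ N(0,I_n)}[f(X)·X_i] = √(2/π) · v_i / ‖v‖₂. -/
theorem stmt19 (n : ℕ) (hn : 0 < n) (v : Fin n → ℝ) (hv : v ≠ 0) (i : Fin n) :
    ∫ X : Fin n → ℝ,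
        (if 0 ≤ ∑ j, v j * X j then (1 : ℝ) else -1) * X i
        ∂(Measure.pi fun _ : Fin n => gaussianReal 0 1) =
      Real.sqrt (2 / Real.pi) * v i / Real.sqrt (∑ j, v j ^ 2) := by
  obtain ⟨m, rfl⟩ : ∃ m, n = m + 1 := ⟨n - 1, (Nat.succ_pred_eq_of_pos hn).symm⟩
  have hmp := measurePreserving_piFinSuccAbove (fun _ : Fin (m+1) => gaussianReal 0 1) i
  set piM := Measure.pi (fun _ : Fin m => gaussianReal 0 1) with hpiM
  set G : ℝ × (Fin m → ℝ) → ℝ :=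
    fun p => (if 0 ≤ v i * p.1 + ∑ j, v (i.succAbove j) * p.2 j then (1:ℝ) else -1) * p.1
    with hG
  have hGe : ∀ x : Fin (m+1) → ℝ, (if 0 ≤ ∑ j, v j * x j then (1:ℝ) else -1) * x i
      = G ((MeasurableEquiv.piFinSuccAbove (fun _ => ℝ) i) x) := by
    intro x
    simp only [hG, MeasurableEquiv.piFinSuccAbove, MeasurableEquiv.coe_mk, Equiv.symm_symm,
      Fin.insertNthEquiv, Equiv.coe_fn_symm_mk]
    rw [Fin.sum_univ_succAbove (fun j => v j * x j) i]
    simp [Fin.removeNth]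
    by_cases hc : 0 ≤ v i * x i + ∑ j, v (i.succAbove j) * x (i.succAbove j) <;> simp [hc]
  simp_rw [hGe]
  rw [hmp.integral_comp']
  have hfst : Integrable (fun p : ℝ × (Fin m → ℝ) => p.1) ((gaussianReal 0 1).prod piM) := by
    have h1 : Integrable (fun x : ℝ => x) (gaussianReal 0 1) := gauss_id_int
    have hmap : Measure.map Prod.fst ((gaussianReal 0 1).prod piM) = gaussianReal 0 1 := by
      rw [Measure.map_fst_prod]; simp
    rw [← hmap] at h1
    exact (integrable_map_measure measurable_id.aestronglyMeasurable
      measurable_fst.aemeasurable).mp h1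
  have hGmeas : Measurable G := by
    apply Measurable.mul _ measurable_fst
    refine Measurable.ite (measurableSet_le measurable_const (by fun_prop))
      measurable_const measurable_const
  have hGint : Integrable G ((gaussianReal 0 1).prod piM) := by
    refine hfst.mono hGmeas.aestronglyMeasurable (Filter.Eventually.of_forall fun p => ?_)
    simp only [hG, Real.norm_eq_abs, abs_mul]
    have h1 : |(if 0 ≤ v i * p.1 + ∑ j, v (i.succAbove j) * p.2 j then (1:ℝ) else -1)| = 1 := by
      split_ifs <;> norm_num
    rw [h1, one_mul]
  rw [integral_prod_symm _ hGint]
  have inner : ∀ z : Fin m → ℝ, (∫ y, G (y, z) ∂(gaussianReal 0 1))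
      = Real.sign (v i) * Real.sqrt (2/π)
        * rexp (-(2*(v i)^2)⁻¹ * ((∑ j, v (i.succAbove j) * z j) + 0)^2) := by
    intro z
    have h := sign_mul_gauss (v i) (∑ j, v (i.succAbove j) * z j)
    rw [h]
    congr 1
    rw [add_zero]
    ring
  simp_rw [inner, mul_assoc, integral_const_mul]
  rw [gauss_quad_pi m (fun j => v (i.succAbove j)) _ 0 (by positivity)]
  have hS' : 0 ≤ ∑ j : Fin m, (v (i.succAbove j))^2 := Finset.sum_nonneg fun _ _ => sq_nonneg _
  set S' : ℝ := ∑ j : Fin m, (v (i.succAbove j))^2 with hS'def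
  have hSsum : (∑ j : Fin (m+1), v j ^2) = (v i)^2 + S' := Fin.sum_univ_succAbove _ i
  rw [hSsum]
  by_cases hvi : v i = 0
  · rw [hvi]
    simp [Real.sign_zero]
  · have hvi2 : 0 < (v i)^2 := by positivity
    have h1 : 1 + 2*(2*(v i)^2)⁻¹*S' = ((v i)^2 + S')/(v i)^2 := by
      field_simp
    rw [h1]
    have hSpos : 0 < (v i)^2 + S' := by positivity
    have hsq : 0 < Real.sqrt ((v i)^2 + S') := Real.sqrt_pos.2 hSpos
    have habs : 0 < |v i| := abs_pos.2 hvi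
    have hsqrt : Real.sqrt (((v i)^2 + S')/(v i)^2) = Real.sqrt ((v i)^2 + S') / |v i| := by
      rw [Real.sqrt_div hSpos.le, Real.sqrt_sq_eq_abs]
    have hexp0 : rexp (-((2*(v i)^2)⁻¹ * 0^2) / (((v i)^2 + S')/(v i)^2)) = 1 := by
      norm_num
    have hsgn : Real.sign (v i) * |v i| = v i := by
      rcases lt_trichotomy (v i) 0 with h | h | h
      · rw [Real.sign_of_neg h, abs_of_neg h]; ring
      · exact absurd h hvi
      · rw [Real.sign_of_pos h, abs_of_pos h]; ring
    rw [hexp0, hsqrt, inv_div]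
    rw [mul_one, show Real.sign (v i) * (Real.sqrt (2/π) * (|v i| / Real.sqrt ((v i)^2 + S'))) = Real.sqrt (2/π) * (Real.sign (v i) * |v i|) / Real.sqrt ((v i)^2 + S') from by ring, hsgn]
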